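/- Let n ≥ 2 be an integer, let n* = ∏_{p prime, p | n} p be the radical of n, and let u be a positive integer coprime to n. Then f(x) = x^n − (n*)^u is irreducible over ℚ, and the number field K = ℚ(α), where α is a complex root of f, is monogenic. -/

import Mathlib

open Polynomial

lemma squarefree_prod_primes {s : Finset ℕ} (hs : ∀ p ∈ s, p.Prime) :
    Squarefree (∏ p ∈ s, p) := by
  classical
  induction s using Finset.induction_on with
  | empty => simpa using squarefree_one
  | @insert a s ha ih =>
    rw [Finset.prod_insert ha]
    have hap : a.Prime := hs a (Finset.mem_insert_self a s)
    refine (Nat.squarefree_mul ?_).2 ⟨hap.squarefree, ih fun p hp => hs p (Finset.mem_insert_of_mem hp)⟩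
    rw [Nat.Prime.coprime_iff_not_dvd hap]
    intro hdvd
    obtain ⟨q, hq, hdq⟩ := (Nat.Prime.prime hap).exists_mem_finset_dvd hdvd
    exact ha (((hs q (Finset.mem_insert_of_mem hq)).dvd_iff_eq hap.ne_one).1 hdq ▸ hq)

lemma eis_aux {nn : ℕ} (hnn : 2 ≤ nn) {m p : ℕ} (hm : Squarefree m) (hp : p.Prime)
    (hpm : p ∣ m) :
    ((X : ℤ[X]) ^ nn - C (m : ℤ)).IsEisensteinAt (Submodule.span ℤ {(p : ℤ)}) := by
  have hdeg : ((X : ℤ[X]) ^ nn - C (m : ℤ)).natDegree = nn := by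
    simpa using natDegree_X_pow_sub_C (n := nn) (r := (m:ℤ))
  constructor
  · rw [(monic_X_pow_sub_C (m:ℤ) (by omega)).leadingCoeff]
    rw [Ideal.submodule_span_eq, Ideal.mem_span_singleton]
    intro h
    rcases Int.isUnit_iff.1 (isUnit_of_dvd_one h) with h1 | h1 <;>
      [skip; omega] <;> exact hp.one_lt.ne' (by exact_mod_cast h1)
  · intro i hi
    rw [hdeg] at hi
    rw [coeff_sub, coeff_X_pow, coeff_C, if_neg hi.ne]
    rw [Ideal.submodule_span_eq, Ideal.mem_span_singleton]
    rcases eq_or_ne i 0 with rfl | h0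
    · simp only [if_pos rfl, zero_sub, dvd_neg]
      exact_mod_cast Int.natCast_dvd_natCast.2 hpm
    · simp [h0]
  · rw [coeff_sub, coeff_X_pow, if_neg (by omega), coeff_C, if_pos rfl, zero_sub,
      Ideal.submodule_span_eq, Ideal.span_singleton_pow, Ideal.mem_span_singleton, dvd_neg]
    intro h
    have : (p:ℤ) * p ∣ (m:ℤ) := by rw [← pow_two]; exact h
    exact hp.prime.not_unit (hm p (by exact_mod_cast this))

theorem radical_pow_monogenic
    {K : Type*} [Field K] [NumberField K] (n u : ℕ) (hn : 2 ≤ n)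
    (hu : 0 < u) (hcop : Nat.Coprime u n)
    (α : K)
    (hroot : Polynomial.aeval α
      ((X : ℤ[X]) ^ n - C ((∏ p ∈ n.primeFactors, (p : ℤ)) ^ u)) = 0)
    (hgen : Algebra.adjoin ℚ {α} = ⊤) :
    Irreducible (((X : ℤ[X]) ^ n - C ((∏ p ∈ n.primeFactors, (p : ℤ)) ^ u)).map
        (Int.castRingHom ℚ)) ∧
      ∃ θ : NumberField.RingOfIntegers K, Algebra.adjoin ℤ {θ} = ⊤ := by
  classical
  set m : ℕ := ∏ p ∈ n.primeFactors, p with hmdef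
  have hprod : (∏ p ∈ n.primeFactors, (p : ℤ)) = (m : ℤ) := (Nat.cast_prod _ _).symm
  have hmsq : Squarefree m := squarefree_prod_primes fun p hp => Nat.prime_of_mem_primeFactors hp
  have hPF : m.primeFactors = n.primeFactors :=
    Nat.primeFactors_prod fun p hp => Nat.prime_of_mem_primeFactors hp
  have hn0 : n ≠ 0 := by omega
  have hm0 : m ≠ 0 := hmsq.ne_zero
  have hm1 : m ≠ 1 := by
    intro h
    have : n.primeFactors = ∅ := by rw [← hPF, h]; simp
    rcases Nat.primeFactors_eq_empty.1 this with h' | h' <;> omega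
  have hpm_iff : ∀ p : ℕ, p.Prime → (p ∣ m ↔ p ∣ n) := by
    intro p hp
    constructor <;> intro h
    · have : p ∈ m.primeFactors := Nat.mem_primeFactors.2 ⟨hp, h, hm0⟩
      exact (Nat.mem_primeFactors.1 (hPF ▸ this)).2.1
    · have : p ∈ n.primeFactors := Nat.mem_primeFactors.2 ⟨hp, h, hn0⟩
      exact (Nat.mem_primeFactors.1 (hPF ▸ this)).2.1
  have key_eis : ∀ p : ℕ, p.Prime → p ∣ n →
      ((X : ℤ[X]) ^ n - C (m : ℤ)).IsEisensteinAt (Submodule.span ℤ {(p : ℤ)}) :=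
    fun p hp hpn => eis_aux hn hmsq hp ((hpm_iff p hp).2 hpn)
  -- α ^ n = m ^ u
  have hα : α ^ n = (m : K) ^ u := by
    have := hroot
    rw [map_sub, map_pow, aeval_X, aeval_C, sub_eq_zero, hprod] at this
    rw [this]; push_cast; ring
  have hM0 : (m : K) ≠ 0 := Nat.cast_ne_zero.2 hm0
  -- choose v, k with u * v = n * k + 1
  obtain ⟨v, -, hv⟩ := Nat.exists_mul_mod_eq_one_of_coprime hcop (by omega)
  set k : ℕ := u * v / n with hkdef
  have huv : u * v = n * k + 1 := by
    rw [hkdef, ← hv]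
    exact (Nat.div_add_mod (u * v) n).symm
  -- define θ
  set θ : K := α ^ v / (m : K) ^ k with hθdef
  have hθn : θ ^ n = (m : K) := by
    have h1 : (α ^ v) ^ n = ((m : K) ^ k) ^ n * (m : K) := by
      rw [← pow_mul, ← pow_mul, mul_comm v n, pow_mul, hα, ← pow_mul, huv, pow_succ,
        mul_comm n k]
    rw [hθdef, div_pow, h1, mul_comm, mul_div_assoc, div_self (pow_ne_zero n (pow_ne_zero k hM0)), mul_one]
  set g : ℤ[X] := (X : ℤ[X]) ^ n - C (m : ℤ) with hgdef
  have hgmonic : g.Monic := monic_X_pow_sub_C _ hn0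
  have hgdeg : g.natDegree = n := natDegree_X_pow_sub_C
  have hgθ : Polynomial.aeval θ g = 0 := by
    rw [hgdef, map_sub, map_pow, aeval_X, aeval_C, hθn]
    push_cast; ring
  have hθint : IsIntegral ℤ θ := ⟨g, hgmonic, hgθ⟩
  have hθQ : IsIntegral ℚ θ := hθint.tower_top
  set gQ : ℚ[X] := g.map (Int.castRingHom ℚ) with hgQdef
  have hgQmonic : gQ.Monic := hgmonic.map _
  have hgQdeg : gQ.natDegree = n := by
    rw [hgQdef, hgmonic.natDegree_map, hgdeg]
  have hgirr : Irreducible g := by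
    obtain ⟨p, hp, hpn⟩ := Nat.exists_prime_and_dvd (by omega : n ≠ 1)
    refine (key_eis p hp hpn).irreducible ?_ hgmonic.isPrimitive (by rw [hgdeg]; omega)
    rw [Ideal.submodule_span_eq]
    exact (Ideal.span_singleton_prime (by exact_mod_cast hp.ne_zero)).2
      (Nat.prime_iff_prime_int.1 hp)
  have hgQirr : Irreducible gQ :=
    (IsPrimitive.Int.irreducible_iff_irreducible_map_cast hgmonic.isPrimitive).1 hgirr
  have hgQθ : Polynomial.aeval θ gQ = 0 := by
    rw [hgQdef, show Int.castRingHom ℚ = algebraMap ℤ ℚ from rfl, aeval_map_algebraMap]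
    exact hgθ
  have hminθ : minpoly ℚ θ = gQ :=
    (minpoly.eq_of_irreducible_of_monic hgQirr hgQθ hgQmonic).symm
  -- a generator gives the finrank
  have hsub_fr : ∀ x : K, IsIntegral ℚ x →
      Module.finrank ℚ (Algebra.adjoin ℚ ({x} : Set K)) = (minpoly ℚ x).natDegree := by
    intro x hx
    rw [(Algebra.adjoin.powerBasis hx).finrank, Algebra.adjoin.powerBasis_dim]
  have htop_fr : ∀ x : K, Algebra.adjoin ℚ ({x} : Set K) = ⊤ →
      Module.finrank ℚ (Algebra.adjoin ℚ ({x} : Set K)) = Module.finrank ℚ K := by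
    intro x htop
    rw [← Subalgebra.finrank_toSubmodule, htop, Algebra.top_toSubmodule, finrank_top]
  -- the defining polynomial of α over ℚ
  set f : ℤ[X] := (X : ℤ[X]) ^ n - C ((m : ℤ) ^ u) with hfdef
  have hfeq : (X : ℤ[X]) ^ n - C ((∏ p ∈ n.primeFactors, (p : ℤ)) ^ u) = f := by
    rw [hfdef, hprod]
  have hfmonic : f.Monic := monic_X_pow_sub_C _ hn0
  have hfα : Polynomial.aeval α f = 0 := by rw [← hfeq]; exact hroot
  have hα_int : IsIntegral ℤ α := ⟨f, hfmonic, hfα⟩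
  have hαQ : IsIntegral ℚ α := hα_int.tower_top
  set fQ : ℚ[X] := f.map (Int.castRingHom ℚ) with hfQdef
  have hfQmonic : fQ.Monic := hfmonic.map _
  have hfQdeg : fQ.natDegree = n := by
    rw [hfQdef, hfmonic.natDegree_map, hfdef, natDegree_X_pow_sub_C]
  have hfQα : Polynomial.aeval α fQ = 0 := by
    rw [hfQdef, show Int.castRingHom ℚ = algebraMap ℤ ℚ from rfl, aeval_map_algebraMap]
    exact hfα
  have hminα_dvd : minpoly ℚ α ∣ fQ := minpoly.dvd ℚ α hfQα
  have hfinα : Module.finrank ℚ K = (minpoly ℚ α).natDegree := by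
    rw [← hsub_fr α hαQ, htop_fr α hgen]
  have hfinle : Module.finrank ℚ K ≤ n := by
    rw [hfinα, ← hfQdeg]
    exact Polynomial.natDegree_le_of_dvd hminα_dvd hfQmonic.ne_zero
  have hfinge : n ≤ Module.finrank ℚ K := by
    have h1 : (minpoly ℚ θ).natDegree ≤ Module.finrank ℚ K := minpoly.natDegree_le θ
    rwa [hminθ, hgQdeg] at h1
  have hfin : Module.finrank ℚ K = n := le_antisymm hfinle hfinge
  -- minpoly of α is fQ, hence fQ is irreducible
  have hminα : minpoly ℚ α = fQ := by
    obtain ⟨c, hc⟩ := hminα_dvd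
    have hmα0 : minpoly ℚ α ≠ 0 := minpoly.ne_zero hαQ
    have hc0 : c ≠ 0 := by
      intro h; rw [h, mul_zero] at hc; exact hfQmonic.ne_zero hc
    have hdeg : c.natDegree = 0 := by
      have := Polynomial.natDegree_mul hmα0 hc0
      rw [← hc, hfQdeg, ← hfinα, hfin] at this
      omega
    have hcC : c = C (c.coeff 0) := Polynomial.eq_C_of_natDegree_eq_zero hdeg
    have hlead : c.coeff 0 = 1 := by
      have h1 := congrArg Polynomial.leadingCoeff hc
      rw [hfQmonic.leadingCoeff, Polynomial.leadingCoeff_mul,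
        (minpoly.monic hαQ).leadingCoeff, one_mul, Polynomial.leadingCoeff, hdeg] at h1
      exact h1.symm
    rw [hc, hcC, hlead, map_one, mul_one]
  have hirr : Irreducible (((X : ℤ[X]) ^ n - C ((∏ p ∈ n.primeFactors, (p : ℤ)) ^ u)).map
      (Int.castRingHom ℚ)) := by
    rw [hfeq, ← hfQdef, ← hminα]
    exact minpoly.irreducible hαQ
  refine ⟨hirr, ?_⟩
  -- monogenicity: θ generates the ring of integers
  have hminθ_deg : (minpoly ℚ θ).natDegree = n := by rw [hminθ, hgQdeg]
  have hθtop : Algebra.adjoin ℚ ({θ} : Set K) = ⊤ := by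
    apply Algebra.toSubmodule_eq_top.1
    apply Submodule.eq_top_of_finrank_eq
    rw [Subalgebra.finrank_toSubmodule, hsub_fr θ hθQ, hminθ_deg, hfin]
  -- power basis generated by θ
  let e : Algebra.adjoin ℚ ({θ} : Set K) ≃ₐ[ℚ] K :=
    (Subalgebra.equivOfEq _ _ hθtop).trans Subalgebra.topEquiv
  let B : PowerBasis ℚ K := (Algebra.adjoin.powerBasis hθQ).map e
  have hBgen : B.gen = θ := rfl
  have hBdim : B.dim = n := by
    rw [show B.dim = (Algebra.adjoin.powerBasis hθQ).dim from rfl,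
      Algebra.adjoin.powerBasis_dim, hminθ_deg]
  -- minpoly of θ over ℤ
  have hminθℤ : minpoly ℤ θ = g := by
    have h1 : minpoly ℚ θ = (minpoly ℤ θ).map (algebraMap ℤ ℚ) :=
      minpoly.isIntegrallyClosed_eq_field_fractions' ℚ hθint
    have h2 : (minpoly ℤ θ).map (algebraMap ℤ ℚ) = g.map (algebraMap ℤ ℚ) := by
      rw [← h1, hminθ, hgQdef]; rfl
    exact Polynomial.map_injective _ (algebraMap ℤ ℚ).injective_int h2
  -- discriminant computation
  set N : ℕ := n ^ n * m ^ (n - 1) with hNdef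
  have hN0 : N ≠ 0 := by positivity
  set E : ℕ := n * (n - 1) / 2 + (n + 1) * (n - 1) with hEdef
  have hdisc : Algebra.discr ℚ B.basis = (-1 : ℚ) ^ E * (N : ℚ) := by
    rw [Algebra.discr_powerBasis_eq_norm, hBgen, hminθ]
    have hder : derivative gQ = C (n : ℚ) * X ^ (n - 1) := by
      rw [hgQdef, hgdef, Polynomial.map_sub, Polynomial.map_pow, map_X, map_C,
        derivative_sub, derivative_C, derivative_X_pow, sub_zero]
    rw [hder]
    have haev : Polynomial.aeval θ (C (n : ℚ) * X ^ (n - 1)) =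
        algebraMap ℚ K (n : ℚ) * θ ^ (n - 1) := by
      rw [map_mul, aeval_C, map_pow, aeval_X]
    rw [haev, map_mul, Algebra.norm_algebraMap, map_pow]
    have hnormθ : Algebra.norm ℚ θ = (-1 : ℚ) ^ (n + 1) * (m : ℚ) := by
      have h1 := Algebra.PowerBasis.norm_gen_eq_coeff_zero_minpoly B
      rw [hBgen, hBdim, hminθ] at h1
      have hcoeff : gQ.coeff 0 = -(m : ℚ) := by
        rw [hgQdef, hgdef, Polynomial.coeff_map, coeff_sub, coeff_X_pow,
          if_neg (by omega : ¬ (0 = n)), coeff_C_zero, zero_sub]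
        simp
      rw [h1, hcoeff]
      ring
    rw [hnormθ, hfin]
    rw [mul_pow, ← pow_mul]
    rw [hEdef, hNdef]
    push_cast
    rw [pow_add]
    ring
  -- every prime dividing N divides n
  have hNprimes : ∀ p : ℕ, p.Prime → p ∣ N → p ∣ n := by
    intro p hp hpN
    rw [hNdef] at hpN
    rcases hp.dvd_mul.1 hpN with h | h
    · exact hp.dvd_of_dvd_pow h
    · exact (hpm_iff p hp).1 (hp.dvd_of_dvd_pow h)
  -- key stripping argument
  have strip : ∀ N' : ℕ, N' ≠ 0 → (∀ p : ℕ, p.Prime → p ∣ N' → p ∣ n) →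
      ∀ z : K, IsIntegral ℤ z → (N' : ℤ) • z ∈ Algebra.adjoin ℤ ({θ} : Set K) →
      z ∈ Algebra.adjoin ℤ ({θ} : Set K) := by
    intro N'
    induction N' using Nat.strong_induction_on with
    | _ N' ih =>
      intro hN'0 hN'p z hz hmem
      rcases eq_or_ne N' 1 with rfl | hN'1
      · simpa using hmem
      · set p : ℕ := N'.minFac with hpdef
        have hp : p.Prime := Nat.minFac_prime hN'1
        have hpd : p ∣ N' := Nat.minFac_dvd N'
        obtain ⟨N'', hN''⟩ := hpd
        have hpn : p ∣ n := hN'p p hp ⟨N'', hN''⟩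
        have hp_int : Prime (p : ℤ) := Nat.prime_iff_prime_int.1 hp
        have heis : (minpoly ℤ B.gen).IsEisensteinAt (Submodule.span ℤ {(p : ℤ)}) := by
          rw [hBgen, hminθℤ]
          exact key_eis p hp hpn
        have hz' : IsIntegral ℤ ((N'' : ℤ) • z) := hz.smul _
        have hsm : (p : ℤ) ^ 1 • ((N'' : ℤ) • z) ∈ Algebra.adjoin ℤ ({B.gen} : Set K) := by
          rw [hBgen, pow_one, smul_smul, ← Int.natCast_mul, ← hN'']
          exact hmem
        have key := mem_adjoin_of_smul_prime_pow_smul_of_minpoly_isEisensteinAt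
          (K := ℚ) hp_int (hBgen ▸ hθint) hz' hsm heis
        rw [hBgen] at key
        have hN''0 : N'' ≠ 0 := by rintro rfl; simp at hN''; omega
        refine ih N'' ?_ hN''0 (fun q hq hqd => hN'p q hq (hN'' ▸ hqd.mul_left p)) z hz key
        have h2 := hp.two_le
        have h3 := Nat.pos_of_ne_zero hN''0
        rw [hN'']
        nlinarith
  -- conclusion: every integral element is in ℤ[θ]
  have main : ∀ z : K, IsIntegral ℤ z → z ∈ Algebra.adjoin ℤ ({θ} : Set K) := by
    intro z hz
    have hd := Algebra.discr_mul_isIntegral_mem_adjoin ℚ (B := B) (hBgen ▸ hθint) hz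
    rw [hBgen, hdisc] at hd
    apply strip N hN0 hNprimes z hz
    have hconv : ∀ w : K, (N : ℚ) • w = (N : ℤ) • w := by
      intro w
      rw [Algebra.smul_def, map_natCast, zsmul_eq_mul]
      push_cast
      ring
    rcases neg_one_pow_eq_or (R := ℚ) E with hE | hE
    · rw [hE, one_mul, hconv] at hd
      exact hd
    · rw [hE, neg_mul, one_mul, neg_smul] at hd
      have h2 := Subalgebra.neg_mem _ hd
      rw [neg_neg, hconv] at h2
      exact h2
  -- build θ as an element of the ring of integers
  refine ⟨⟨θ, hθint⟩, ?_⟩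
  rw [eq_top_iff]
  rintro z -
  have hz : (algebraMap (NumberField.RingOfIntegers K) K) z ∈ Algebra.adjoin ℤ ({θ} : Set K) :=
    main _ (NumberField.RingOfIntegers.isIntegral_coe z)
  have himg : Algebra.adjoin ℤ ({θ} : Set K) =
      (Algebra.adjoin ℤ ({⟨θ, hθint⟩} : Set (NumberField.RingOfIntegers K))).map
        (IsScalarTower.toAlgHom ℤ (NumberField.RingOfIntegers K) K) := by
    rw [AlgHom.map_adjoin]
    congr 1
    exact (Set.image_singleton (f := ⇑(IsScalarTower.toAlgHom ℤ (NumberField.RingOfIntegers K) K))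
      (a := (⟨θ, hθint⟩ : NumberField.RingOfIntegers K))).symm
  rw [himg] at hz
  obtain ⟨w, hw, hweq⟩ := hz
  have : w = z := NumberField.RingOfIntegers.coe_injective hweq
  exact this ▸ hw
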